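/- Let c be a positive integer and let d be an integer coprime to c. Define linear operators u and v on the space of functions φ : ℤ/cℤ → ℂ by (uφ)([n]) = φ([n−1]) and (vφ)([n]) = exp(−2πi d n̄/c)·φ([n]), where n̄ ∈ {0,…,c−1} is the representative of [n]. If T is a ℂ-linear endomorphism of the space of functions ℤ/cℤ → ℂ with T∘u = u∘T and T∘v = v∘T, then T is a scalar multiple of the identity. -/

import Mathlib

open Complex Real

/-- Irreducibility of the Heisenberg representation of `Heis((ℤ/cℤ)²)` on
`C(ℤ/cℤ)`: for `d` coprime to `c`, any linear endomorphism `T` of the space of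
functions `ℤ/cℤ → ℂ` commuting with the shift `(uφ)([n]) = φ([n−1])` and the
modulation `(vφ)([n]) = exp(−2πi d n̄/c)·φ([n])` is a scalar multiple of the
identity. -/
theorem commutant_of_finite_heisenberg_representation_is_scalar
    (c : ℕ) (hc : 0 < c) (d : ℤ) (hd : IsCoprime d (c : ℤ))
    (T : (ZMod c → ℂ) →ₗ[ℂ] (ZMod c → ℂ))
    (hTu : ∀ φ : ZMod c → ℂ, ∀ n : ZMod c,
      T (fun m => φ (m - 1)) n = T φ (n - 1))
    (hTv : ∀ φ : ZMod c → ℂ, ∀ n : ZMod c,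
      T (fun m => Complex.exp (-2 * π * I * (d : ℂ) * ((m.val : ℕ) : ℂ) / (c : ℂ)) * φ m) n =
        Complex.exp (-2 * π * I * (d : ℂ) * ((n.val : ℕ) : ℂ) / (c : ℂ)) * T φ n) :
    ∃ lam : ℂ, ∀ φ : ZMod c → ℂ, T φ = lam • φ := by
  haveI : NeZero c := ⟨hc.ne'⟩
  set χ : ZMod c → ℂ := fun m => Complex.exp (-2 * π * I * (d : ℂ) * ((m.val : ℕ) : ℂ) / (c : ℂ))
    with hχ
  have hcC : (c : ℂ) ≠ 0 := Nat.cast_ne_zero.mpr hc.ne'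
  -- injectivity of χ
  have chi_inj : ∀ m n : ZMod c, χ m = χ n → m = n := by
    intro m n h
    rw [hχ] at h
    simp only [Complex.exp_eq_exp_iff_exists_int] at h
    obtain ⟨k, hk⟩ := h
    have hne : (2 * π * I * (c : ℂ)) ≠ 0 := by
      simp [Real.pi_ne_zero, I_ne_zero, hcC]
    field_simp at hk
    have h2 : (d : ℂ) * ((n.val : ℂ) - (m.val : ℂ)) = k * c := by
      apply mul_left_cancel₀ hne
      linear_combination (2 * π * I * (c : ℂ)) * hk
    have h3 : d * ((n.val : ℤ) - (m.val : ℤ)) = k * c := by exact_mod_cast h2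
    have hdvd : (c : ℤ) ∣ (n.val : ℤ) - (m.val : ℤ) :=
      hd.symm.dvd_of_dvd_mul_left ⟨k, by linarith⟩
    have h4 : (((n.val : ℤ) - (m.val : ℤ) : ℤ) : ZMod c) = 0 :=
      (ZMod.intCast_zmod_eq_zero_iff_dvd _ c).mpr hdvd
    push_cast at h4
    rw [ZMod.natCast_val, ZMod.natCast_val, ZMod.cast_id, ZMod.cast_id] at h4
    exact (sub_eq_zero.mp h4).symm
  -- basis vectors
  set e : ZMod c → (ZMod c → ℂ) := fun k => Pi.single k (1 : ℂ) with he
  -- T e_k is supported at k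
  have hsupp : ∀ k n : ZMod c, n ≠ k → T (e k) n = 0 := by
    intro k n hn
    have h1 := hTv (e k) n
    have h2 : (fun m => χ m * e k m) = χ k • e k := by
      funext m
      by_cases hm : m = k
      · subst hm; simp [he]
      · simp [he, Pi.single_apply, hm]
    rw [show (fun m => Complex.exp (-2 * π * I * (d : ℂ) * ((m.val : ℕ) : ℂ) / (c : ℂ)) * e k m)
        = χ k • e k from h2, map_smul] at h1
    have h3 : (χ k - χ n) * T (e k) n = 0 := by
      have := h1
      simp only [Pi.smul_apply, smul_eq_mul] at this
      linear_combination this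
    rcases mul_eq_zero.mp h3 with h | h
    · exact absurd (chi_inj k n (sub_eq_zero.mp h)) (Ne.symm hn)
    · exact h
  have hdiag : ∀ k : ZMod c, T (e k) = T (e k) k • e k := by
    intro k
    funext n
    by_cases hn : n = k
    · subst hn; simp [he]
    · simp [he, Pi.single_apply, hn]; exact hsupp k n hn
  -- shift relation: λ_{k+1} = λ_k
  have hshift : ∀ k : ZMod c, T (e (k + 1)) (k + 1) = T (e k) k := by
    intro k
    have h1 := hTu (e k) (k + 1)
    have h2 : (fun m => e k (m - 1)) = e (k + 1) := by
      funext m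
      by_cases hm : m = k + 1
      · subst hm; simp [he]
      · have : m - 1 ≠ k := fun h => hm (by rw [← h]; ring)
        simp [he, Pi.single_apply, hm, this]
    rw [h2] at h1
    simpa using h1
  have hconst : ∀ k : ZMod c, T (e k) k = T (e 0) 0 := by
    have key : ∀ j : ℕ, T (e (j : ZMod c)) (j : ZMod c) = T (e 0) 0 := by
      intro j
      induction j with
      | zero => simp
      | succ n ih => push_cast; rw [hshift (n : ZMod c)]; exact ih
    intro k
    have : ((k.val : ℕ) : ZMod c) = k := by
      rw [ZMod.natCast_val, ZMod.cast_id]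
    rw [← this]; exact key k.val
  refine ⟨T (e 0) 0, fun φ => ?_⟩
  have hdecomp : φ = ∑ k : ZMod c, φ k • e k := by
    funext n
    simp [he, Pi.single_apply]
  rw [hdecomp, map_sum]
  have : ∀ k : ZMod c, T (φ k • e k) = (T (e 0) 0) • (φ k • e k) := by
    intro k
    rw [map_smul, hdiag k, hconst k, smul_comm]
  simp_rw [this]
  rw [← Finset.smul_sum]
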